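/- For any real number β > 1, the limit lim_{n→∞} (log card(Σ_β^n))/n exists and equals log β. -/

import Mathlib

open Filter MeasureTheory Set

/-- The β-transformation `T_β(x) = βx - ⌊βx⌋`. -/
noncomputable def betaT (β x : ℝ) : ℝ := Int.fract (β * x)

/-- The `(n+1)`-st digit of the β-expansion of `x` (0-indexed):
`betaDigit β x n = ⌊β ⬝ T_β^n(x)⌋`. -/
noncomputable def betaDigit (β x : ℝ) (n : ℕ) : ℕ := (⌊β * (betaT β)^[n] x⌋).toNat

/-- The set `Σ_β^n` of β-admissible words of length `n`. -/
def admissibleWords (β : ℝ) (n : ℕ) : Set (Fin n → ℕ) :=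
  {w | ∃ x ∈ Set.Ico (0:ℝ) 1, ∀ i : Fin n, betaDigit β x i = w i}

/-- The set `Σ_β` of β-admissible digit sequences. -/
def admissibleSeqs (β : ℝ) : Set (ℕ → ℕ) :=
  {e | ∃ x ∈ Set.Ico (0:ℝ) 1, ∀ i, betaDigit β x i = e i}

/-- The cylinder `I_n(w)` of a word `w`. -/
def cylinder (β : ℝ) {n : ℕ} (w : Fin n → ℕ) : Set ℝ :=
  {x | x ∈ Set.Ico (0:ℝ) 1 ∧ ∀ i : Fin n, betaDigit β x i = w i}

/-- The partial digit sum `S_n(x,β)`. -/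
noncomputable def Sdig (β x : ℝ) (n : ℕ) : ℝ := ∑ i ∈ Finset.range n, (betaDigit β x i : ℝ)

namespace BetaAux

variable {β : ℝ}

lemma iter_mem {x : ℝ} (hx : x ∈ Set.Ico (0:ℝ) 1) (k : ℕ) :
    (betaT β)^[k] x ∈ Set.Ico (0:ℝ) 1 := by
  induction k with
  | zero => exact hx
  | succ k ih =>
      rw [Function.iterate_succ_apply']
      exact ⟨Int.fract_nonneg _, Int.fract_lt_one _⟩

lemma digit_cast (hβ : 1 < β) {x : ℝ} (hx : x ∈ Set.Ico (0:ℝ) 1) (k : ℕ) :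
    (betaDigit β x k : ℝ) = (⌊β * (betaT β)^[k] x⌋ : ℤ) := by
  have h0 : (0:ℤ) ≤ ⌊β * (betaT β)^[k] x⌋ :=
    Int.floor_nonneg.mpr (mul_nonneg (by linarith) (iter_mem hx k).1)
  rw [betaDigit]
  exact_mod_cast congrArg (Int.cast : ℤ → ℝ) (Int.toNat_of_nonneg h0)

lemma digit_add (hβ : 1 < β) {x : ℝ} (hx : x ∈ Set.Ico (0:ℝ) 1) (k : ℕ) :
    β * (betaT β)^[k] x = (betaDigit β x k : ℝ) + (betaT β)^[k+1] x := by
  rw [Function.iterate_succ_apply', betaT, digit_cast hβ hx k, Int.fract]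
  ring

lemma digit_lt (hβ : 1 < β) {x : ℝ} (hx : x ∈ Set.Ico (0:ℝ) 1) (k : ℕ) :
    (betaDigit β x k : ℝ) < β := by
  have h1 := digit_add hβ hx k
  have h2 := (iter_mem (β := β) hx (k+1)).1
  have h3 := (iter_mem (β := β) hx k).2
  nlinarith [(iter_mem (β := β) hx k).1]

lemma digit_le_floor (hβ : 1 < β) {x : ℝ} (hx : x ∈ Set.Ico (0:ℝ) 1) (k : ℕ) :
    betaDigit β x k ≤ ⌊β⌋₊ :=
  Nat.le_floor (digit_lt hβ hx k).le

lemma tele (hβ : 1 < β) {x : ℝ} (hx : x ∈ Set.Ico (0:ℝ) 1) (n : ℕ) :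
    x = (∑ i ∈ Finset.range n, (betaDigit β x i : ℝ) / β ^ (i+1))
        + (betaT β)^[n] x / β ^ n := by
  have hb0 : (0:ℝ) < β := by linarith
  induction n with
  | zero => simp
  | succ n ih =>
      rw [Finset.sum_range_succ]
      have hd := digit_add hβ hx n
      have key : (betaT β)^[n] x / β ^ n
          = ((betaDigit β x n : ℝ) + (betaT β)^[n+1] x) / β ^ (n+1) := by
        rw [← hd, pow_succ', mul_div_mul_left _ _ (ne_of_gt hb0)]
      have hsplit : ((betaDigit β x n : ℝ) + (betaT β)^[n+1] x) / β ^ (n+1)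
          = (betaDigit β x n : ℝ) / β ^ (n+1) + (betaT β)^[n+1] x / β ^ (n+1) :=
        add_div _ _ _
      linarith [ih, key, hsplit]

/-- the value of a word -/
noncomputable def val (β : ℝ) {n : ℕ} (w : Fin n → ℕ) : ℝ :=
  ∑ i : Fin n, (w i : ℝ) / β ^ ((i : ℕ) + 1)

lemma cyl_eq (hβ : 1 < β) {n : ℕ} {w : Fin n → ℕ} {x : ℝ} (hx : x ∈ cylinder β w) :
    x = val β w + (betaT β)^[n] x / β ^ n := by
  have h := tele hβ hx.1 n
  rw [val]
  conv_lhs => rw [h]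
  congr 1
  rw [← Fin.sum_univ_eq_sum_range (fun i => (betaDigit β x i : ℝ) / β ^ (i+1)) n]
  exact Finset.sum_congr rfl fun i _ => by rw [hx.2 i]

lemma val_nonneg (hβ : 1 < β) {n : ℕ} (w : Fin n → ℕ) : 0 ≤ val β w := by
  apply Finset.sum_nonneg
  intro i _
  positivity

lemma mem_Ico_of_cyl (hβ : 1 < β) {n : ℕ} {w : Fin n → ℕ} {x : ℝ} (hx : x ∈ cylinder β w) :
    val β w ≤ x ∧ x < val β w + 1 / β ^ n := by
  have h := cyl_eq hβ hx
  have h0 := (iter_mem (β := β) hx.1 n).1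
  have h1 := (iter_mem (β := β) hx.1 n).2
  have hbn : (0:ℝ) < β ^ n := by positivity
  constructor
  · rw [h]; have : 0 ≤ (betaT β)^[n] x / β ^ n := by positivity
    linarith
  · rw [h]
    have : (betaT β)^[n] x / β ^ n < 1 / β ^ n := by gcongr
    linarith

/-- extension of a word to ℕ (scaled values) -/
noncomputable def gv (β : ℝ) {n : ℕ} (u : Fin n → ℕ) : ℕ → ℝ :=
  fun i => if h : i < n then (u ⟨i, h⟩ : ℝ) / β ^ (i+1) else 0

lemma gv_nonneg (hβ : 1 < β) {n : ℕ} (u : Fin n → ℕ) (i : ℕ) : 0 ≤ gv β u i := by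
  unfold gv
  split
  · positivity
  · exact le_rfl

lemma val_eq_gv (hβ : 1 < β) {n : ℕ} (u : Fin n → ℕ) :
    val β u = ∑ i ∈ Finset.range n, gv β u i := by
  rw [val, ← Fin.sum_univ_eq_sum_range (gv β u) n]
  refine Finset.sum_congr rfl fun i _ => ?_
  rw [gv]
  rw [dif_pos i.2]

lemma lt_val (hβ : 1 < β) {n : ℕ} {u u' : Fin n → ℕ} {j : Fin n}
    (hagree : ∀ i : Fin n, (i:ℕ) < (j:ℕ) → u i = u' i) (hj : u j < u' j)
    {x : ℝ} (hx : x ∈ cylinder β u) : x < val β u' := by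
  set m : ℕ := (j : ℕ) with hm
  have hmn : m < n := j.2
  have hb0 : (0:ℝ) < β := by linarith
  have hbm : (0:ℝ) < β ^ (m+1) := by positivity
  have h1 := tele hβ hx.1 (m+1)
  have hdig : ∀ i ∈ Finset.range (m+1), (betaDigit β x i : ℝ) / β ^ (i+1) = gv β u i := by
    intro i hi
    have hin : i < n := lt_of_lt_of_le (Finset.mem_range.1 hi) hmn
    rw [gv, dif_pos hin]
    have := hx.2 ⟨i, hin⟩
    simp only [Fin.val_mk] at this ⊢
    rw [this]
  rw [Finset.sum_congr rfl hdig] at h1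
  have hT1 := (iter_mem (β := β) hx.1 (m+1)).2
  have h2 : x < ∑ i ∈ Finset.range (m+1), gv β u i + 1 / β ^ (m+1) := by
    rw [h1]
    have : (betaT β)^[m+1] x / β ^ (m+1) < 1 / β ^ (m+1) := by gcongr
    linarith
  have hgm : gv β u m = (u j : ℝ) / β ^ (m+1) := by
    rw [gv, dif_pos hmn]
  have hgm' : gv β u' m = (u' j : ℝ) / β ^ (m+1) := by
    rw [gv, dif_pos hmn]
  have hag : ∀ i ∈ Finset.range m, gv β u i = gv β u' i := by
    intro i hi
    have him := Finset.mem_range.1 hi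
    have hin : i < n := lt_trans him hmn
    rw [gv, gv, dif_pos hin, dif_pos hin]
    rw [hagree ⟨i, hin⟩ him]
  have hstep : (u j : ℝ) + 1 ≤ (u' j : ℝ) := by exact_mod_cast Nat.succ_le_of_lt hj
  have h3 : ∑ i ∈ Finset.range (m+1), gv β u i + 1 / β ^ (m+1)
      ≤ ∑ i ∈ Finset.range (m+1), gv β u' i := by
    rw [Finset.sum_range_succ, Finset.sum_range_succ, Finset.sum_congr rfl hag, hgm, hgm']
    have : (u j : ℝ) / β ^ (m+1) + 1 / β ^ (m+1) ≤ (u' j : ℝ) / β ^ (m+1) := by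
      rw [← add_div, div_le_div_iff_of_pos_right]  -- may need name fix
      · exact hstep
      · exact hbm
    linarith
  have h4 : ∑ i ∈ Finset.range (m+1), gv β u' i ≤ val β u' := by
    rw [val_eq_gv hβ]
    apply Finset.sum_le_sum_of_subset_of_nonneg
    · exact Finset.range_subset_range.2 hmn
    · intro i _ _
      exact gv_nonneg hβ u' i
  linarith

def reach (β : ℝ) {n : ℕ} (w : Fin n → ℕ) : Set ℝ :=
  (betaT β)^[n] '' cylinder β w

def IsFull (β : ℝ) {n : ℕ} (w : Fin n → ℕ) : Prop :=
  Set.Ico (0:ℝ) 1 ⊆ reach β w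

lemma stepA (hβ : 1 < β) {x : ℝ} (hx : x ∈ Set.Ico (0:ℝ) 1) {n : ℕ} {δ : ℝ} (hδ0 : 0 ≤ δ)
    (hδ : δ ≤ (betaT β)^[n] x) : ∀ k, k ≤ n → δ * β ^ k ≤ (betaT β)^[k] x * β ^ n := by
  have hb0 : (0:ℝ) < β := by linarith
  have key : ∀ j k, k + j = n → δ * β ^ k ≤ (betaT β)^[k] x * β ^ n := by
    intro j
    induction j with
    | zero =>
        intro k hk
        simp only [Nat.add_zero] at hk
        subst hk
        exact mul_le_mul_of_nonneg_right hδ (by positivity)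
    | succ j ihj =>
        intro k hk
        have hk1 : (k+1) + j = n := by omega
        have ih := ihj (k+1) hk1
        have hd := digit_add hβ hx k
        have hdnn : (0:ℝ) ≤ (betaDigit β x k : ℝ) := Nat.cast_nonneg _
        have h5 : (betaT β)^[k+1] x ≤ β * (betaT β)^[k] x := by linarith
        have h6 : δ * β ^ (k+1) ≤ (β * (betaT β)^[k] x) * β ^ n := by
          calc δ * β ^ (k+1) ≤ (betaT β)^[k+1] x * β ^ n := ih
          _ ≤ (β * (betaT β)^[k] x) * β ^ n :=
              mul_le_mul_of_nonneg_right h5 (by positivity)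
        have h7 : δ * β ^ k * β ≤ ((betaT β)^[k] x * β ^ n) * β := by
          calc δ * β ^ k * β = δ * β ^ (k+1) := by rw [pow_succ]; ring
          _ ≤ (β * (betaT β)^[k] x) * β ^ n := h6
          _ = ((betaT β)^[k] x * β ^ n) * β := by ring
        exact le_of_mul_le_mul_right h7 hb0
  intro k hk
  exact key (n - k) k (by omega)

lemma shift_iter (hβ : 1 < β) {x : ℝ} (hx : x ∈ Set.Ico (0:ℝ) 1) {n : ℕ} {δ : ℝ}
    (hδ0 : 0 ≤ δ) (hδ : δ ≤ (betaT β)^[n] x) :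
    ∀ k, k ≤ n → (betaT β)^[k] (x - δ / β ^ n) = (betaT β)^[k] x - δ * β ^ k / β ^ n := by
  have hb0 : (0:ℝ) < β := by linarith
  have hbn : (0:ℝ) < β ^ n := by positivity
  intro k
  induction k with
  | zero => intro _; simp
  | succ k ihk =>
      intro hk1
      have hk : k ≤ n := by omega
      have ih := ihk hk
      have hd := digit_add hβ hx k
      set y : ℝ := (betaT β)^[k+1] x - δ * β ^ (k+1) / β ^ n with hy
      have hy0 : 0 ≤ y := by
        have := stepA hβ hx hδ0 hδ (k+1) hk1
        rw [hy]
        have : δ * β ^ (k+1) / β ^ n ≤ (betaT β)^[k+1] x := by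
          rw [div_le_iff₀ hbn]
          linarith [this]
        linarith
      have hy1 : y < 1 := by
        have h1 := (iter_mem (β := β) hx (k+1)).2
        have h2 : 0 ≤ δ * β ^ (k+1) / β ^ n := by positivity
        rw [hy]; linarith
      have harg : β * ((betaT β)^[k] x - δ * β ^ k / β ^ n)
          = ((betaDigit β x k : ℤ) : ℝ) + y := by
        rw [hy]
        push_cast
        rw [mul_sub, hd, pow_succ]
        ring
      rw [Function.iterate_succ_apply', ih, betaT, harg, Int.fract_intCast_add,
        Int.fract_eq_self.2 ⟨hy0, hy1⟩, hy]

lemma shift_digit (hβ : 1 < β) {x : ℝ} (hx : x ∈ Set.Ico (0:ℝ) 1) {n : ℕ} {δ : ℝ}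
    (hδ0 : 0 ≤ δ) (hδ : δ ≤ (betaT β)^[n] x) :
    ∀ k, k < n → betaDigit β (x - δ / β ^ n) k = betaDigit β x k := by
  have hb0 : (0:ℝ) < β := by linarith
  have hbn : (0:ℝ) < β ^ n := by positivity
  intro k hk
  have ih := shift_iter hβ hx hδ0 hδ k (le_of_lt hk)
  have hd := digit_add hβ hx k
  set y : ℝ := (betaT β)^[k+1] x - δ * β ^ (k+1) / β ^ n with hy
  have hy0 : 0 ≤ y := by
    have h := stepA hβ hx hδ0 hδ (k+1) hk
    rw [hy]
    have : δ * β ^ (k+1) / β ^ n ≤ (betaT β)^[k+1] x := by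
      rw [div_le_iff₀ hbn]
      linarith [h]
    linarith
  have hy1 : y < 1 := by
    have h1 := (iter_mem (β := β) hx (k+1)).2
    have h2 : 0 ≤ δ * β ^ (k+1) / β ^ n := by positivity
    rw [hy]; linarith
  have harg : β * ((betaT β)^[k] x - δ * β ^ k / β ^ n)
      = ((betaDigit β x k : ℤ) : ℝ) + y := by
    rw [hy]
    push_cast
    rw [mul_sub, hd, pow_succ]
    ring
  have hfl : ⌊β * (betaT β)^[k] (x - δ / β ^ n)⌋ = (betaDigit β x k : ℤ) := by
    rw [ih, harg, Int.floor_intCast_add, Int.floor_eq_zero_iff.2 ⟨hy0, hy1⟩, add_zero]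
  rw [betaDigit, hfl, Int.toNat_natCast]

lemma shift_mem (hβ : 1 < β) {x : ℝ} (hx : x ∈ Set.Ico (0:ℝ) 1) {n : ℕ} {δ : ℝ}
    (hδ0 : 0 ≤ δ) (hδ : δ ≤ (betaT β)^[n] x) :
    x - δ / β ^ n ∈ Set.Ico (0:ℝ) 1 := by
  have hb0 : (0:ℝ) < β := by linarith
  have hbn : (0:ℝ) < β ^ n := by positivity
  have hA := stepA hβ hx hδ0 hδ 0 (Nat.zero_le n)
  simp only [Function.iterate_zero_apply, pow_zero, mul_one] at hA
  constructor
  · have : δ / β ^ n ≤ x := by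
      rw [div_le_iff₀ hbn]
      linarith
    linarith
  · have h2 : 0 ≤ δ / β ^ n := by positivity
    linarith [hx.2]

lemma reach_down (hβ : 1 < β) {n : ℕ} {w : Fin n → ℕ} {r r' : ℝ}
    (hr : r ∈ reach β w) (h0 : 0 ≤ r') (h1 : r' ≤ r) : r' ∈ reach β w := by
  obtain ⟨x, hx, hTx⟩ := hr
  set δ : ℝ := r - r' with hδdef
  have hδ0 : 0 ≤ δ := by rw [hδdef]; linarith
  have hδ : δ ≤ (betaT β)^[n] x := by rw [hTx, hδdef]; linarith
  have hbn : (0:ℝ) < β ^ n := by positivity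
  refine ⟨x - δ / β ^ n, ⟨shift_mem hβ hx.1 hδ0 hδ, fun i => ?_⟩, ?_⟩
  · rw [shift_digit hβ hx.1 hδ0 hδ i i.2]
    exact hx.2 i
  · rw [shift_iter hβ hx.1 hδ0 hδ n le_rfl, hTx,
      mul_div_cancel_right₀ δ (ne_of_gt hbn)]
    linarith

lemma mem_cyl_snoc {n : ℕ} {w : Fin n → ℕ} {d : ℕ} {x : ℝ} :
    x ∈ cylinder β (Fin.snoc w d : Fin (n+1) → ℕ) ↔
      x ∈ cylinder β w ∧ betaDigit β x n = d := by
  constructor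
  · intro h
    refine ⟨⟨h.1, fun i => ?_⟩, ?_⟩
    · have := h.2 (Fin.castSucc i)
      rwa [Fin.snoc_castSucc, Fin.coe_castSucc] at this
    · have := h.2 (Fin.last n)
      rwa [Fin.snoc_last, Fin.val_last] at this
  · rintro ⟨⟨h1, h2⟩, h3⟩
    refine ⟨h1, fun i => ?_⟩
    refine Fin.lastCases ?_ ?_ i
    · rw [Fin.snoc_last, Fin.val_last]; exact h3
    · intro j; rw [Fin.snoc_castSucc, Fin.coe_castSucc]; exact h2 j

lemma nonfull_unique (hβ : 1 < β) {n : ℕ} {w : Fin n → ℕ} {d d' : ℕ} (hdd : d < d')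
    (hne' : (cylinder β (Fin.snoc w d' : Fin (n+1) → ℕ)).Nonempty)
    (hnf : ¬ IsFull β (Fin.snoc w d : Fin (n+1) → ℕ)) : False := by
  have hb0 : (0:ℝ) < β := by linarith
  obtain ⟨x', hx'⟩ := hne'
  rw [mem_cyl_snoc] at hx'
  have hd' : (d' : ℝ) ≤ β * (betaT β)^[n] x' := by
    have h := digit_cast hβ hx'.1.1 n
    rw [hx'.2] at h
    rw [h]
    exact Int.floor_le _
  obtain ⟨s, hs, hsr⟩ := Set.not_subset.1 hnf
  set r0 : ℝ := ((d:ℝ) + s)/β with hr0def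
  have h1 : 0 ≤ r0 := by
    have := hs.1
    have : (0:ℝ) ≤ (d:ℝ) + s := by positivity
    positivity
  have hcast : (d:ℝ) + 1 ≤ (d':ℝ) := by exact_mod_cast Nat.succ_le_of_lt hdd
  have h2 : r0 ≤ (betaT β)^[n] x' := by
    rw [hr0def, div_le_iff₀ hb0]
    have := hs.2
    nlinarith [hd']
  have hr0 : r0 ∈ reach β w := reach_down hβ ⟨x', hx'.1, rfl⟩ h1 h2
  obtain ⟨x, hx, hTx⟩ := hr0
  have hb : β * (betaT β)^[n] x = ((d:ℤ):ℝ) + s := by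
    rw [hTx, hr0def]
    push_cast
    field_simp
  apply hsr
  refine ⟨x, ?_, ?_⟩
  · rw [mem_cyl_snoc]
    refine ⟨hx, ?_⟩
    rw [betaDigit, hb, Int.floor_intCast_add, Int.floor_eq_zero_iff.2 ⟨hs.1, hs.2⟩, add_zero,
      Int.toNat_natCast]
  · rw [Function.iterate_succ_apply', betaT, hb, Int.fract_intCast_add,
      Int.fract_eq_self.2 ⟨hs.1, hs.2⟩]

lemma full_zero (hβ : 1 < β) (u : Fin 0 → ℕ) : IsFull β u :=
  fun r hr => ⟨r, ⟨hr, fun i => i.elim0⟩, rfl⟩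

lemma full_gap (hβ : 1 < β) {k : ℕ} {u u' : Fin k → ℕ} (hu : IsFull β u)
    {j : Fin k} (hagree : ∀ i : Fin k, (i:ℕ) < (j:ℕ) → u i = u' i) (hlt : u j < u' j) :
    val β u + 1 / β ^ k ≤ val β u' := by
  have hbk : (0:ℝ) < β ^ k := by positivity
  by_contra hcon
  push_neg at hcon
  obtain ⟨x0, hx0, hT0⟩ := hu ⟨le_rfl, zero_lt_one⟩
  have hx0v : x0 = val β u := by
    have h := cyl_eq hβ hx0
    rw [hT0] at h
    simpa using h
  have hlt0 : val β u < val β u' := by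
    have h := lt_val hβ hagree hlt hx0
    rwa [hx0v] at h
  set r : ℝ := (val β u' - val β u) * β ^ k with hrdef
  have hr : r ∈ Set.Ico (0:ℝ) 1 := by
    constructor
    · rw [hrdef]; nlinarith
    · rw [hrdef]
      have h1 : val β u' - val β u < 1 / β ^ k := by linarith
      calc (val β u' - val β u) * β ^ k < (1 / β ^ k) * β ^ k :=
            mul_lt_mul_of_pos_right h1 hbk
      _ = 1 := by field_simp
  obtain ⟨x, hx, hTx⟩ := hu hr
  have hxv : x = val β u' := by
    have h := cyl_eq hβ hx
    rw [hTx, hrdef, mul_div_cancel_right₀ _ (ne_of_gt hbk)] at h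
    rw [h]; ring
  have h := lt_val hβ hagree hlt hx
  rw [hxv] at h
  exact lt_irrefl _ h

lemma exists_least_diff {k : ℕ} {u u' : Fin k → ℕ} (h : u ≠ u') :
    ∃ j : Fin k, (∀ i : Fin k, (i:ℕ) < (j:ℕ) → u i = u' i) ∧ u j ≠ u' j := by
  classical
  set S : Finset (Fin k) := Finset.univ.filter (fun i => u i ≠ u' i) with hS
  have hSne : S.Nonempty := by
    rcases Function.ne_iff.1 h with ⟨i, hi⟩
    exact ⟨i, by simp [hS, hi]⟩
  refine ⟨S.min' hSne, fun i hi => ?_, ?_⟩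
  · by_contra hne
    have hiS : i ∈ S := by simp [hS, hne]
    have := S.min'_le i hiS
    have : ((S.min' hSne : Fin k) : ℕ) ≤ (i : ℕ) := this
    omega
  · have := S.min'_mem hSne
    simpa [hS] using this

def pre {n : ℕ} (w : Fin n → ℕ) (m : ℕ) : Fin m → ℕ :=
  fun i => if h : (i:ℕ) < n then w ⟨i, h⟩ else 0

lemma mem_cyl_pre {n : ℕ} {w : Fin n → ℕ} {x : ℝ} (hx : x ∈ cylinder β w)
    (m : ℕ) (h : m ≤ n) : x ∈ cylinder β (pre w m) := by
  refine ⟨hx.1, fun i => ?_⟩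
  have hin : (i:ℕ) < n := lt_of_lt_of_le i.2 h
  rw [pre, dif_pos hin]
  exact hx.2 ⟨i, hin⟩

lemma pre_eq_self {n : ℕ} (w : Fin n → ℕ) : pre w n = w := by
  funext i
  rw [pre, dif_pos i.2]

lemma pre_succ {n : ℕ} (w : Fin n → ℕ) (m : ℕ) (h : m + 1 ≤ n) :
    pre w (m+1) = Fin.snoc (pre w m) (w ⟨m, by omega⟩) := by
  funext i
  refine Fin.lastCases ?_ ?_ i
  · rw [Fin.snoc_last, pre, dif_pos (show ((Fin.last m : Fin (m+1)):ℕ) < n by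
      rw [Fin.val_last]; omega)]
    exact congrArg w (Fin.ext (by simp))
  · intro j
    rw [Fin.snoc_castSucc]
    rcases Nat.lt_or_ge (j:ℕ) n with hj | hj
    · rw [pre, pre, dif_pos (show ((Fin.castSucc j : Fin (m+1)):ℕ) < n by
        rw [Fin.coe_castSucc]; exact hj), dif_pos hj]
      exact congrArg w (Fin.ext (by simp))
    · rw [pre, pre, dif_neg (show ¬ ((Fin.castSucc j : Fin (m+1)):ℕ) < n by
        rw [Fin.coe_castSucc]; omega), dif_neg (by omega)]

noncomputable def level (β : ℝ) {n : ℕ} (w : Fin n → ℕ) : ℕ :=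
  @Nat.findGreatest (fun m => IsFull β (pre w m)) (Classical.decPred _) n

lemma level_le {n : ℕ} (w : Fin n → ℕ) : level β w ≤ n := by
  classical
  unfold level
  exact Nat.findGreatest_le (P := fun m => IsFull β (pre w m)) n

lemma level_full (hβ : 1 < β) {n : ℕ} (w : Fin n → ℕ) :
    IsFull β (pre w (level β w)) := by
  classical
  unfold level
  exact Nat.findGreatest_spec (P := fun m => IsFull β (pre w m)) (Nat.zero_le n) (full_zero hβ (pre w 0))

lemma level_not_full {n : ℕ} (w : Fin n → ℕ) {m : ℕ} (h1 : level β w < m) (hm : m ≤ n) :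
    ¬ IsFull β (pre w m) := by
  classical
  unfold level at h1
  exact Nat.findGreatest_is_greatest (P := fun m => IsFull β (pre w m)) h1 hm

lemma ext_aux (hβ : 1 < β) {n : ℕ} {w w' : Fin n → ℕ}
    (hw : (cylinder β w).Nonempty) (hw' : (cylinder β w').Nonempty)
    {k : ℕ} (hk : k ≤ n)
    (hpre : pre w k = pre w' k)
    (hnfw : ∀ m, k < m → m ≤ n → ¬ IsFull β (pre w m))
    (hnfw' : ∀ m, k < m → m ≤ n → ¬ IsFull β (pre w' m)) :
    w = w' := by
  have main : ∀ j, k ≤ j → j ≤ n → pre w j = pre w' j := by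
    intro j hkj
    induction j, hkj using Nat.le_induction with
    | base => intro hj; exact hpre
    | succ j ihkj ih =>
        intro hj1
        have hjn : j ≤ n := by omega
        have hP := ih hjn
        have e1 := pre_succ w j hj1
        have e2 := pre_succ w' j hj1
        have hcw : (cylinder β (pre w (j+1))).Nonempty := by
          obtain ⟨x, hx⟩ := hw
          exact ⟨x, mem_cyl_pre hx (j+1) hj1⟩
        have hcw' : (cylinder β (pre w' (j+1))).Nonempty := by
          obtain ⟨x, hx⟩ := hw'
          exact ⟨x, mem_cyl_pre hx (j+1) hj1⟩
        have hnf1 : ¬ IsFull β (pre w (j+1)) := hnfw (j+1) (by omega) hj1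
        have hnf1' : ¬ IsFull β (pre w' (j+1)) := hnfw' (j+1) (by omega) hj1
        have hdig : w ⟨j, by omega⟩ = w' ⟨j, by omega⟩ := by
          rcases lt_trichotomy (w ⟨j, by omega⟩) (w' ⟨j, by omega⟩) with hlt | heq | hgt
          · exfalso
            apply nonfull_unique hβ hlt
            · rw [← hP] at e2
              rw [← e2]
              exact hcw'
            · rw [← e1]
              exact hnf1
          · exact heq
          · exfalso
            apply nonfull_unique hβ hgt
            · rw [← e1]
              exact hcw
            · rw [← hP] at e2
              rw [← e2]
              exact hnf1'
        rw [e1, e2, ← hP, hdig]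
  have hfin := main n (by omega) le_rfl
  rw [pre_eq_self, pre_eq_self] at hfin
  exact hfin

lemma val_lt_one (hβ : 1 < β) {k : ℕ} {u : Fin k → ℕ} (hu : (cylinder β u).Nonempty) :
    val β u < 1 := by
  obtain ⟨x, hx⟩ := hu
  have h := (mem_Ico_of_cyl hβ hx).1
  have := hx.1.2
  linarith

lemma full_cyl_nonempty (hβ : 1 < β) {k : ℕ} {u : Fin k → ℕ} (hu : IsFull β u) :
    (cylinder β u).Nonempty := by
  obtain ⟨x, hx, _⟩ := hu ⟨le_rfl, zero_lt_one⟩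
  exact ⟨x, hx⟩

lemma fenc_bound (hβ : 1 < β) {k : ℕ} {u : Fin k → ℕ} (hu : IsFull β u) :
    ⌊β ^ k * val β u⌋₊ < ⌊β ^ k⌋₊ + 1 := by
  have hbk : (0:ℝ) < β ^ k := by positivity
  have hv0 : 0 ≤ val β u := val_nonneg hβ u
  have hv1 : val β u < 1 := val_lt_one hβ (full_cyl_nonempty hβ hu)
  have h1 : β ^ k * val β u ≤ β ^ k := by nlinarith
  have h2 : ⌊β ^ k * val β u⌋₊ ≤ ⌊β ^ k⌋₊ := Nat.floor_le_floor h1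
  omega

lemma fenc_inj (hβ : 1 < β) {k : ℕ} {u u' : Fin k → ℕ} (hu : IsFull β u) (hu' : IsFull β u')
    (hne : u ≠ u') : ⌊β ^ k * val β u⌋₊ ≠ ⌊β ^ k * val β u'⌋₊ := by
  have hbk : (0:ℝ) < β ^ k := by positivity
  have key : ∀ {a b : Fin k → ℕ}, IsFull β a → IsFull β b →
      val β a + 1 / β ^ k ≤ val β b → ⌊β ^ k * val β a⌋₊ ≠ ⌊β ^ k * val β b⌋₊ := by
    intro a b ha hb hgap
    have hva : 0 ≤ val β a := val_nonneg hβ a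
    have h1 : β ^ k * val β a + 1 ≤ β ^ k * val β b := by
      have h3 := mul_le_mul_of_nonneg_left hgap (le_of_lt hbk)
      have h2 : β ^ k * (1 / β ^ k) = 1 := by field_simp
      nlinarith
    have h0a : 0 ≤ β ^ k * val β a := by positivity
    have e1 : ⌊β ^ k * val β a⌋₊ + 1 = ⌊β ^ k * val β a + 1⌋₊ := (Nat.floor_add_one h0a).symm
    have e2 : ⌊β ^ k * val β a + 1⌋₊ ≤ ⌊β ^ k * val β b⌋₊ := Nat.floor_le_floor h1
    omega
  obtain ⟨j, hagree, hj⟩ := exists_least_diff hne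
  rcases lt_or_gt_of_ne hj with hlt | hgt
  · exact key hu hu' (full_gap hβ hu hagree hlt)
  · have hagree' : ∀ i : Fin k, (i:ℕ) < (j:ℕ) → u' i = u i := fun i hi => (hagree i hi).symm
    exact (key hu' hu (full_gap hβ hu' hagree' hgt)).symm

lemma adm_finite (hβ : 1 < β) (n : ℕ) : (admissibleWords β n).Finite := by
  apply Set.Finite.subset (Set.Finite.pi (fun _ : Fin n => Set.finite_Iic (⌊β⌋₊)))
  intro w hw
  obtain ⟨x, hx, hd⟩ := hw
  simp only [Set.mem_pi, Set.mem_univ, Set.mem_Iic, forall_true_left]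
  intro i
  rw [← hd i]
  exact digit_le_floor hβ hx i

lemma adm_iff {n : ℕ} {w : Fin n → ℕ} :
    w ∈ admissibleWords β n ↔ (cylinder β w).Nonempty := by
  constructor
  · rintro ⟨x, hx, hd⟩; exact ⟨x, hx, hd⟩
  · rintro ⟨x, hx, hd⟩; exact ⟨x, hx, hd⟩

lemma card_lower (hβ : 1 < β) (n : ℕ) :
    (β ^ n : ℝ) ≤ (Nat.card ↥(admissibleWords β n) : ℝ) := by
  have hbn : (0:ℝ) < β ^ n := by positivity
  haveI : Finite ↥(admissibleWords β n) := (adm_finite hβ n).to_subtype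
  set m := ⌈β ^ n⌉₊ with hm
  have hxj : ∀ j : Fin m, ((j:ℝ)/β^n) ∈ Set.Ico (0:ℝ) 1 := by
    intro j
    constructor
    · positivity
    · rw [div_lt_one hbn]
      exact Nat.lt_ceil.1 j.2
  set g : Fin m → ↥(admissibleWords β n) := fun j =>
    ⟨fun i => betaDigit β ((j:ℝ)/β^n) i, ⟨(j:ℝ)/β^n, hxj j, fun _ => rfl⟩⟩ with hg
  have hginj : Function.Injective g := by
    intro j j' hjj
    have hw : (fun i : Fin n => betaDigit β ((j:ℝ)/β^n) i)
        = (fun i : Fin n => betaDigit β ((j':ℝ)/β^n) i) := congrArg Subtype.val hjj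
    set w := fun i : Fin n => betaDigit β ((j:ℝ)/β^n) i with hwdef
    have hc1 : ((j:ℝ)/β^n) ∈ cylinder β w := ⟨hxj j, fun _ => rfl⟩
    have hc2 : ((j':ℝ)/β^n) ∈ cylinder β w := ⟨hxj j', fun i => congrFun hw.symm i⟩
    have h1 := mem_Ico_of_cyl hβ hc1
    have h2 := mem_Ico_of_cyl hβ hc2
    have key : ∀ a b : ℕ, a < b → val β w ≤ (a:ℝ)/β^n → ((b:ℝ)/β^n) < val β w + 1/β^n
        → False := by
      intro a b hab hva hvb
      have hcast : (a:ℝ) + 1 ≤ (b:ℝ) := by exact_mod_cast Nat.succ_le_of_lt hab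
      have hdiv : ((a:ℝ) + 1)/β^n ≤ (b:ℝ)/β^n := by gcongr
      rw [add_div] at hdiv
      linarith
    apply Fin.ext
    rcases lt_trichotomy (j:ℕ) (j':ℕ) with h | h | h
    · exact absurd (key j j' h h1.1 h2.2) (fun f => f)
    · exact h
    · exact absurd (key j' j h h2.1 h1.2) (fun f => f)
  have hcard := Nat.card_le_card_of_injective g hginj
  have hfm : Nat.card (Fin m) = m := by simp
  rw [hfm] at hcard
  calc (β ^ n : ℝ) ≤ (m : ℝ) := Nat.le_ceil _
  _ ≤ _ := by exact_mod_cast hcard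

lemma card_upper (hβ : 1 < β) (n : ℕ) :
    (Nat.card ↥(admissibleWords β n) : ℝ) ≤ (β/(β-1)) * β ^ n + (n+1) := by
  classical
  haveI : Finite ↥(admissibleWords β n) := (adm_finite hβ n).to_subtype
  have hb1 : (0:ℝ) < β - 1 := by linarith
  set G : ↥(admissibleWords β n) → Σ _k : Fin (n+1), ℕ := fun w =>
    ⟨⟨level β w.1, Nat.lt_succ_of_le (level_le w.1)⟩,
     ⌊β ^ (level β w.1) * val β (pre w.1 (level β w.1))⌋₊⟩ with hGdef
  have hGmem : ∀ w : ↥(admissibleWords β n),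
      (G w).2 < ⌊β ^ (((G w).1 : Fin (n+1)) : ℕ)⌋₊ + 1 := by
    intro w
    exact fenc_bound hβ (level_full hβ w.1)
  have hGinj : Function.Injective G := by
    intro a b hab
    have h1 : level β a.1 = level β b.1 := by
      have := congrArg (fun p : Σ _k : Fin (n+1), ℕ => ((p.1 : Fin (n+1)) : ℕ)) hab
      simpa [hGdef] using this
    have h2 : ⌊β ^ (level β a.1) * val β (pre a.1 (level β a.1))⌋₊
        = ⌊β ^ (level β b.1) * val β (pre b.1 (level β b.1))⌋₊ := by
      have := congrArg (fun p : Σ _k : Fin (n+1), ℕ => p.2) hab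
      simpa [hGdef] using this
    set k := level β a.1 with hk
    rw [← h1] at h2
    have hfa : IsFull β (pre a.1 k) := level_full hβ a.1
    have hfb : IsFull β (pre b.1 k) := by
      have := level_full hβ b.1
      rwa [← h1] at this
    have hpre : pre a.1 k = pre b.1 k := by
      by_contra hne
      exact fenc_inj hβ hfa hfb hne h2
    have hval : a.1 = b.1 := by
      apply ext_aux hβ (adm_iff.1 a.2) (adm_iff.1 b.2) (level_le a.1) hpre
      · intro m hm1 hm2
        exact level_not_full a.1 hm1 hm2
      · intro m hm1 hm2
        apply level_not_full b.1 _ hm2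
        rw [← h1]
        exact hm1
    exact Subtype.ext hval
  -- refine injection into finite sigma of Fin
  set G' : ↥(admissibleWords β n) → Σ k : Fin (n+1), Fin (⌊β ^ (k:ℕ)⌋₊ + 1) := fun w =>
    ⟨(G w).1, ⟨(G w).2, hGmem w⟩⟩ with hG'def
  have hG'inj : Function.Injective G' := by
    intro a b hab
    apply hGinj
    have h1 : (G a).1 = (G b).1 := congrArg (fun p => p.1) hab
    have h2' := congrArg (fun p : Σ k : Fin (n+1), Fin (⌊β ^ (k:ℕ)⌋₊ + 1) => (p.2 : ℕ)) hab
    exact Sigma.ext h1 (by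
      have : (G a).2 = (G b).2 := h2'
      rw [this])
  have hcard := Nat.card_le_card_of_injective G' hG'inj
  have hsig : Nat.card (Σ k : Fin (n+1), Fin (⌊β ^ (k:ℕ)⌋₊ + 1))
      = ∑ k : Fin (n+1), (⌊β ^ (k:ℕ)⌋₊ + 1) := by
    rw [Nat.card_eq_fintype_card]
    simp [Fintype.card_sigma]
  rw [hsig] at hcard
  have hreal : (Nat.card ↥(admissibleWords β n) : ℝ)
      ≤ ∑ k : Fin (n+1), ((β ^ (k:ℕ) : ℝ) + 1) := by
    calc (Nat.card ↥(admissibleWords β n) : ℝ)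
        ≤ ((∑ k : Fin (n+1), (⌊β ^ (k:ℕ)⌋₊ + 1) : ℕ) : ℝ) := by exact_mod_cast hcard
    _ = ∑ k : Fin (n+1), ((⌊β ^ (k:ℕ)⌋₊ : ℝ) + 1) := by push_cast; ring
    _ ≤ ∑ k : Fin (n+1), ((β ^ (k:ℕ) : ℝ) + 1) := by
        apply Finset.sum_le_sum
        intro k _
        have := Nat.floor_le (by positivity : (0:ℝ) ≤ β ^ (k:ℕ))
        linarith
  have hgeom : ∑ k : Fin (n+1), ((β ^ (k:ℕ) : ℝ) + 1)
      = (∑ k ∈ Finset.range (n+1), β ^ k) + (n+1) := by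
    rw [Finset.sum_add_distrib]
    congr 1
    · exact Fin.sum_univ_eq_sum_range (fun k => (β:ℝ) ^ k) (n+1)
    · simp
  have hgs : (∑ k ∈ Finset.range (n+1), (β:ℝ) ^ k) = (β ^ (n+1) - 1)/(β - 1) :=
    geom_sum_eq (by linarith) (n+1)
  have hfinal : (∑ k ∈ Finset.range (n+1), (β:ℝ) ^ k) ≤ (β/(β-1)) * β ^ n := by
    rw [hgs]
    rw [div_le_iff₀ hb1]
    have : (β/(β-1)) * β ^ n * (β - 1) = β ^ (n+1) := by
      field_simp
      ring
    rw [this]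
    have : (0:ℝ) < β ^ (n+1) := by positivity
    linarith
  rw [hgeom] at hreal
  push_cast at hreal ⊢
  linarith

end BetaAux

/-- The topological entropy of `(I, T_β)`:
`lim_{n→∞} (log card Σ_β^n)/n = log β`. -/
theorem stmt1 (β : ℝ) (hβ : 1 < β) :
    Tendsto (fun n : ℕ => Real.log (Nat.card ↥(admissibleWords β n)) / n)
      atTop (nhds (Real.log β)) := by
  have hb0 : (0:ℝ) < β := by linarith
  set c : ℝ := β/(β-1) with hc
  have hc0 : 0 < c := div_pos hb0 (by linarith)
  have hNpos : ∀ n : ℕ, (0:ℝ) < (Nat.card ↥(admissibleWords β n) : ℝ) := by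
    intro n
    have h := BetaAux.card_lower hβ n
    have h1 : (0:ℝ) < β ^ n := by positivity
    linarith
  have hlow : ∀ᶠ n : ℕ in atTop,
      Real.log β ≤ Real.log (Nat.card ↥(admissibleWords β n)) / n := by
    filter_upwards [eventually_ge_atTop 1] with n hn
    have hn0 : (0:ℝ) < (n:ℝ) := by exact_mod_cast hn
    rw [le_div_iff₀ hn0]
    have h1 : Real.log (β ^ n) ≤ Real.log (Nat.card ↥(admissibleWords β n)) :=
      Real.log_le_log (by positivity) (BetaAux.card_lower hβ n)
    rw [Real.log_pow] at h1
    calc Real.log β * n = (n:ℝ) * Real.log β := by ring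
    _ ≤ _ := h1
  have hup : ∀ᶠ n : ℕ in atTop,
      Real.log (Nat.card ↥(admissibleWords β n)) / n
        ≤ Real.log β + Real.log ((n:ℝ) + (c+1)) / n := by
    filter_upwards [eventually_ge_atTop 1] with n hn
    have hn0 : (0:ℝ) < (n:ℝ) := by exact_mod_cast hn
    have h4 : (1:ℝ) ≤ β ^ n := one_le_pow₀ (by linarith)
    have h2 : (Nat.card ↥(admissibleWords β n) : ℝ) ≤ ((n:ℝ) + (c+1)) * β ^ n := by
      have h3 := BetaAux.card_upper hβ n
      nlinarith [h3, hc0, hn0]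
    have hlog := Real.log_le_log (hNpos n) h2
    have hpos1 : (0:ℝ) < (n:ℝ) + (c+1) := by linarith
    rw [Real.log_mul (ne_of_gt hpos1) (by positivity), Real.log_pow] at hlog
    rw [div_le_iff₀ hn0, add_mul, div_mul_cancel₀ _ (ne_of_gt hn0)]
    calc Real.log (Nat.card ↥(admissibleWords β n))
        ≤ Real.log ((n:ℝ)+(c+1)) + (n:ℝ) * Real.log β := hlog
    _ = Real.log β * (n:ℝ) + Real.log ((n:ℝ)+(c+1)) := by ring
  have hlim : Tendsto (fun n : ℕ => Real.log β + Real.log ((n:ℝ) + (c+1)) / n)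
      atTop (nhds (Real.log β)) := by
    have h0 : Tendsto (fun n : ℕ => Real.log ((n:ℝ) + (c+1)) / n) atTop (nhds 0) := by
      have h1 := Real.tendsto_pow_log_div_mul_add_atTop 1 (-(c+1)) 1 one_ne_zero
      have h2 : Tendsto (fun n : ℕ => (n:ℝ) + (c+1)) atTop atTop :=
        tendsto_atTop_add_const_right atTop (c+1) tendsto_natCast_atTop_atTop
      have h3 := h1.comp h2
      have heq : (fun n : ℕ => Real.log ((n:ℝ) + (c+1)) / n)
          = (fun x => Real.log x ^ 1 / (1 * x + -(c+1))) ∘ (fun n : ℕ => (n:ℝ) + (c+1)) := by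
        funext n
        simp only [Function.comp_apply, pow_one]
        congr 1
        ring
      rw [heq]
      exact h3
    have h5 := h0.const_add (Real.log β)
    simpa using h5
  exact tendsto_of_tendsto_of_tendsto_of_le_of_le' tendsto_const_nhds hlim hlow hup
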